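/- Let ℓ ∈ ℕ with ℓ ≥ 2, and let A, B ∈ ℂ. Fix β ∈ ℂ with β² = B. Define complex numbers ẽ₀, ẽ₁, …, ẽ_{ℓ−1} by ẽ₀ = A/ℓ, ẽ₁ = −(A²/ℓ² − B)/(ℓ−1), and, for 1 ≤ k ≤ ℓ−2, ẽ_{k+1} = −(1/(ℓ−(k+1))) Σ_{t=0}^{k} ẽ_t ẽ_{k−t}. Then −Σ_{t=0}^{ℓ−1} ẽ_t ẽ_{ℓ−1−t} = ((−1)^ℓ/(ℓ!)²) ∏_{j=0}^{ℓ} (A − (ℓ−2j)β). (Since the factors for j and ℓ−j pair up, the right-hand side is a polynomial in A and B and does not depend on the choice of the square root β.) -/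

import Mathlib

open Finset
set_option maxHeartbeats 1000000
namespace Stmt2Aux

noncomputable def PP (ℓ : ℕ) (A β : ℂ) (m : ℕ) : ℂ :=
  ∏ j ∈ Finset.range m, (A + ((ℓ : ℂ) - 2 * (j : ℂ)) * β)

noncomputable def cc (ℓ : ℕ) (β : ℂ) (k m : ℕ) : ℂ :=
  (-1) ^ m * ((ℓ - m).factorial : ℂ) * β ^ (k - m)
    / (((k - m).factorial : ℂ) * (m.factorial : ℂ) * (ℓ.factorial : ℂ))

noncomputable def uu (ℓ : ℕ) (A β : ℂ) (k : ℕ) : ℂ :=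
  ∑ m ∈ Finset.range (k + 1), cc ℓ β k m * PP ℓ A β m

lemma fact_ne (n : ℕ) : ((n.factorial : ℂ)) ≠ 0 := by
  exact_mod_cast n.factorial_ne_zero

lemma fact1 (n : ℕ) : (((n + 1).factorial : ℕ) : ℂ) = ((n : ℂ) + 1) * (n.factorial : ℂ) := by
  rw [Nat.factorial_succ]; push_cast; ring

lemma fact2 (n : ℕ) : (((n + 2).factorial : ℕ) : ℂ)
    = ((n : ℂ) + 2) * ((n : ℂ) + 1) * (n.factorial : ℂ) := by
  rw [show n + 2 = (n + 1) + 1 from rfl, fact1, fact1]; push_cast; ring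

lemma fact_pred (ℓ : ℕ) (hℓ : 1 ≤ ℓ) :
    (ℓ.factorial : ℂ) = (ℓ : ℂ) * ((ℓ - 1).factorial : ℂ) := by
  rw [← Nat.mul_factorial_pred (by omega : ℓ ≠ 0)]; push_cast; ring

lemma uu_zero (ℓ : ℕ) (A β : ℂ) : uu ℓ A β 0 = 1 := by
  simp [uu, cc, PP]
  exact Nat.factorial_ne_zero ℓ

lemma uu_one (ℓ : ℕ) (hℓ : 1 ≤ ℓ) (A β : ℂ) : uu ℓ A β 1 = -A / ℓ := by
  have hℓ0 : ((ℓ : ℂ)) ≠ 0 := by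
    exact_mod_cast Nat.one_le_iff_ne_zero.mp hℓ
  have hfact := fact_pred ℓ hℓ
  rw [uu]
  rw [Finset.sum_range_succ, Finset.sum_range_succ, Finset.sum_range_zero]
  simp [cc, PP]
  rw [hfact]
  have hf := fact_ne (ℓ - 1)
  field_simp
  ring

lemma term_id (ℓ k m : ℕ) (β : ℂ) (hk1 : 1 ≤ k) (hk : k + 1 ≤ ℓ) (hm : m ≤ k + 1) :
    ((k : ℂ) + 1) * ((k : ℂ) - (ℓ : ℂ)) * cc ℓ β (k + 1) m
      = (if m = 0 then 0 else cc ℓ β k (m - 1))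
        + (if m ≤ k then -(((ℓ : ℂ) - 2 * (m : ℂ)) * β) * cc ℓ β k m else 0)
        + (if m ≤ k - 1 then β ^ 2 * cc ℓ β (k - 1) m else 0) := by
  have h0 := fact_ne ℓ
  rcases Nat.eq_zero_or_pos m with hm0 | hm1
  · -- m = 0
    subst hm0
    obtain ⟨n, rfl⟩ : ∃ n, k = n + 1 := ⟨k - 1, by omega⟩
    obtain ⟨c, rfl⟩ : ∃ c, ℓ = n + 2 + c := ⟨ℓ - (n + 2), by omega⟩
    rw [if_pos rfl, if_pos (by omega), if_pos (by omega)]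
    simp only [cc, Nat.sub_zero, Nat.add_sub_cancel, Nat.factorial_zero]
    have h1 := fact_ne n
    have h2 := fact_ne (n + 1)
    have h3 := fact_ne (n + 1 + 1)
    have h4 := fact_ne (n + 2 + c)
    field_simp
    rw [show n + 1 + 1 = n + 2 from rfl, fact2 n, fact1 n]
    push_cast
    ring
  · rcases Nat.lt_or_ge m (k + 1) with hmk | hmk
    · rcases Nat.eq_or_lt_of_le (Nat.lt_succ_iff.mp hmk) with hmk2 | hmk2
      · -- m = k
        obtain ⟨m₀, rfl⟩ : ∃ m₀, m = m₀ + 1 := ⟨m - 1, by omega⟩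
        subst hmk2
        obtain ⟨c, rfl⟩ : ∃ c, ℓ = (m₀ + 1) + 1 + c := ⟨ℓ - (m₀ + 2), by omega⟩
        rw [if_neg (by omega), if_pos (by omega), if_neg (by omega)]
        simp only [cc]
        simp only [Nat.add_sub_cancel,
          show m₀ + 1 + 1 + c - (m₀ + 1) = c + 1 from by omega,
          show m₀ + 1 + 1 + c - m₀ = c + 2 from by omega,
          show m₀ + 1 + 1 - (m₀ + 1) = 1 from by omega,
          show m₀ + 1 - (m₀ + 1) = 0 from by omega,
          show m₀ + 1 - m₀ = 1 from by omega]
        simp only [Nat.factorial_one, Nat.factorial_zero]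
        have h1 := fact_ne m₀
        have h2 := fact_ne (m₀ + 1)
        have h3 := fact_ne (c + 1)
        have h4 := fact_ne (c + 2)
        have h5 := fact_ne (m₀ + 1 + 1 + c)
        field_simp
        rw [fact2 c, fact1 c, fact1 m₀]
        push_cast
        ring
      · -- 1 ≤ m ≤ k - 1
        obtain ⟨m₀, rfl⟩ : ∃ m₀, m = m₀ + 1 := ⟨m - 1, by omega⟩
        obtain ⟨u, rfl⟩ : ∃ u, k = (m₀ + 1) + 1 + u := ⟨k - m₀ - 2, by omega⟩
        obtain ⟨c, rfl⟩ : ∃ c, ℓ = (m₀ + 1 + 1 + u) + 1 + c := ⟨ℓ - (m₀ + 3 + u), by omega⟩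
        rw [if_neg (by omega), if_pos (by omega), if_pos (by omega)]
        simp only [cc]
        simp only [Nat.add_sub_cancel,
          show m₀ + 1 + 1 + u + 1 + c - (m₀ + 1) = u + 2 + c from by omega,
          show m₀ + 1 + 1 + u + 1 + c - m₀ = u + 3 + c from by omega,
          show m₀ + 1 + 1 + u + 1 - (m₀ + 1) = u + 2 from by omega,
          show m₀ + 1 + 1 + u - (m₀ + 1) = u + 1 from by omega,
          show m₀ + 1 + 1 + u - m₀ = u + 2 from by omega,
          show m₀ + 1 + 1 + u - 1 = m₀ + 1 + u from by omega,
          show m₀ + 1 + u - (m₀ + 1) = u from by omega]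
        simp only [show m₀ + 1 + 1 + u + 1 + c = 3 + m₀ + u + c from by omega,
          show u + 2 + c = 2 + u + c from by omega,
          show u + 3 + c = 3 + u + c from by omega]
        have h1 := fact_ne m₀
        have h2 := fact_ne (m₀ + 1)
        have h3 := fact_ne u
        have h4 := fact_ne (u + 1)
        have h5 := fact_ne (u + 2)
        have h6 := fact_ne (2 + u + c)
        have h7 := fact_ne (3 + u + c)
        have h8 := fact_ne (3 + m₀ + u + c)
        field_simp
        rw [show 3 + u + c = (2 + u + c) + 1 from by omega, fact1 (2 + u + c),
          fact2 u, fact1 u, fact1 m₀]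
        push_cast
        ring
    · -- m = k + 1
      have hme : m = k + 1 := le_antisymm hm hmk
      subst hme
      obtain ⟨c, rfl⟩ : ∃ c, ℓ = (k + 1) + c := ⟨ℓ - (k + 1), by omega⟩
      rw [if_neg (by omega), if_neg (by omega), if_neg (by omega)]
      simp only [cc]
      simp only [Nat.sub_self, Nat.add_sub_cancel,
        show k + 1 + c - (k + 1) = c from by omega,
        show k + 1 + c - k = c + 1 from by omega,
        show k + 1 - k = 1 from by omega]
      simp only [Nat.factorial_zero, Nat.factorial_one]
      have h1 := fact_ne k
      have h2 := fact_ne (k + 1)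
      have h3 := fact_ne c
      have h4 := fact_ne (c + 1)
      have h5 := fact_ne (k + 1 + c)
      field_simp
      rw [fact1 c, fact1 k]
      push_cast
      ring

lemma PP_succ (ℓ : ℕ) (A β : ℂ) (m : ℕ) :
    PP ℓ A β (m + 1) = PP ℓ A β m * (A + ((ℓ : ℂ) - 2 * (m : ℂ)) * β) :=
  Finset.prod_range_succ _ _

lemma uu_rec (ℓ : ℕ) (A β : ℂ) (k : ℕ) (hk1 : 1 ≤ k) (hk : k + 1 ≤ ℓ) :
    ((k : ℂ) + 1) * ((k : ℂ) - (ℓ : ℂ)) * uu ℓ A β (k + 1)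
      = A * uu ℓ A β k + β ^ 2 * uu ℓ A β (k - 1) := by
  have hS1 : A * uu ℓ A β k
      = (∑ m ∈ Finset.range (k + 2), (if m = 0 then 0 else cc ℓ β k (m - 1) * PP ℓ A β m))
        + ∑ m ∈ Finset.range (k + 2),
            (if m ≤ k then -(((ℓ : ℂ) - 2 * (m : ℂ)) * β) * (cc ℓ β k m * PP ℓ A β m) else 0) := by
    have e1 : ∑ m ∈ Finset.range (k + 2),
        (if m = 0 then (0 : ℂ) else cc ℓ β k (m - 1) * PP ℓ A β m)
        = ∑ m ∈ Finset.range (k + 1), cc ℓ β k m * PP ℓ A β (m + 1) := by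
      rw [Finset.sum_range_succ']
      simp
    have e2 : ∑ m ∈ Finset.range (k + 2),
        (if m ≤ k then -(((ℓ : ℂ) - 2 * (m : ℂ)) * β) * (cc ℓ β k m * PP ℓ A β m) else 0)
        = ∑ m ∈ Finset.range (k + 1), -(((ℓ : ℂ) - 2 * (m : ℂ)) * β) * (cc ℓ β k m * PP ℓ A β m) := by
      rw [Finset.sum_range_succ, if_neg (by omega), add_zero]
      refine Finset.sum_congr rfl fun m hm => ?_
      rw [if_pos (by simpa using Nat.lt_succ_iff.mp (Finset.mem_range.mp hm))]
    rw [e1, e2, uu, Finset.mul_sum, ← Finset.sum_add_distrib]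
    refine Finset.sum_congr rfl fun m _ => ?_
    rw [PP_succ]
    ring
  have hS3 : β ^ 2 * uu ℓ A β (k - 1)
      = ∑ m ∈ Finset.range (k + 2),
          (if m ≤ k - 1 then β ^ 2 * (cc ℓ β (k - 1) m * PP ℓ A β m) else 0) := by
    rw [uu, Finset.mul_sum, show k - 1 + 1 = k from by omega]
    have h2 : ∀ m ∈ Finset.range (k + 2), m ∉ Finset.range k →
        (if m ≤ k - 1 then β ^ 2 * (cc ℓ β (k - 1) m * PP ℓ A β m) else 0) = 0 := by
      intro m _ hm
      rw [Finset.mem_range, not_lt] at hm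
      rw [if_neg (by omega)]
    rw [← Finset.sum_subset (Finset.range_subset_range.mpr (by omega : k ≤ k + 2)) h2]
    refine Finset.sum_congr rfl fun m hm => ?_
    rw [Finset.mem_range] at hm
    rw [if_pos (by omega)]
  rw [hS1, hS3, uu, Finset.mul_sum, ← Finset.sum_add_distrib, ← Finset.sum_add_distrib]
  refine Finset.sum_congr rfl fun m hm => ?_
  have hmk : m ≤ k + 1 := by simpa [Nat.lt_succ_iff] using Finset.mem_range.mp hm
  have h := term_id ℓ k m β hk1 hk hmk
  calc ((k : ℂ) + 1) * ((k : ℂ) - (ℓ : ℂ)) * (cc ℓ β (k + 1) m * PP ℓ A β m)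
      = (((k : ℂ) + 1) * ((k : ℂ) - (ℓ : ℂ)) * cc ℓ β (k + 1) m) * PP ℓ A β m := by ring
    _ = ((if m = 0 then 0 else cc ℓ β k (m - 1))
          + (if m ≤ k then -(((ℓ : ℂ) - 2 * (m : ℂ)) * β) * cc ℓ β k m else 0)
          + (if m ≤ k - 1 then β ^ 2 * cc ℓ β (k - 1) m else 0)) * PP ℓ A β m := by rw [h]
    _ = _ := by split_ifs <;> ring

lemma tri (g : ℕ → ℕ → ℂ) (n : ℕ) :
    ∑ t ∈ Finset.range n, ∑ s ∈ Finset.range (n - t), g t s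
      = ∑ r ∈ Finset.range n, ∑ t ∈ Finset.range (r + 1), g t (r - t) := by
  induction n with
  | zero => simp
  | succ n ih =>
    rw [Finset.sum_range_succ (f := fun r => ∑ t ∈ Finset.range (r + 1), g t (r - t)), ← ih]
    have h1 : ∀ t ∈ Finset.range (n + 1),
        ∑ s ∈ Finset.range (n + 1 - t), g t s
          = ∑ s ∈ Finset.range (n - t), g t s + g t (n - t) := by
      intro t ht
      rw [Finset.mem_range] at ht
      rw [show n + 1 - t = (n - t) + 1 from by omega, Finset.sum_range_succ]
    rw [Finset.sum_congr rfl h1, Finset.sum_add_distrib,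
      Finset.sum_range_succ (f := fun t => ∑ s ∈ Finset.range (n - t), g t s),
      Nat.sub_self, Finset.sum_range_zero, add_zero]

lemma cast_sub_ne (ℓ k : ℕ) (h : k < ℓ) : ((ℓ : ℂ) - (k : ℂ)) ≠ 0 := by
  have h2 : ((ℓ - k : ℕ) : ℂ) ≠ 0 := Nat.cast_ne_zero.mpr (by omega)
  rwa [Nat.cast_sub h.le] at h2

section main

variable {ℓ : ℕ} {A B β : ℂ} {e : ℕ → ℂ}

lemma Sform (hℓ : 2 ≤ ℓ) (hβ : β ^ 2 = B)
    (h0 : e 0 = A / (ℓ : ℂ))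
    (h1 : e 1 = -(A ^ 2 / (ℓ : ℂ) ^ 2 - B) / ((ℓ : ℂ) - 1))
    (hrec : ∀ k : ℕ, 1 ≤ k → k ≤ ℓ - 2 →
      e (k + 1) = -(1 / ((ℓ : ℂ) - ((k : ℂ) + 1)))
        * ∑ t ∈ Finset.range (k + 1), e t * e (k - t))
    (k : ℕ) (hk2 : 2 ≤ k) (hkℓ : k ≤ ℓ)
    (hstar : ∀ j, j < k → ∑ t ∈ Finset.range (j + 1), e t * uu ℓ A β (j - t)
      = -((j : ℂ) + 1) * uu ℓ A β (j + 1)) :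
    ∑ t ∈ Finset.range k, e t * e (k - 1 - t)
      = -∑ t ∈ Finset.range k, ((k : ℂ) - (t : ℂ)) * (e t * uu ℓ A β (k - t))
        - (B * uu ℓ A β (k - 1)
            - ∑ t ∈ Finset.range k, ((ℓ : ℂ) - (t : ℂ)) * (e t * uu ℓ A β (k - t))
            + (ℓ : ℂ) * e 0 * uu ℓ A β k) := by
  have hL0 : ((ℓ : ℂ)) ≠ 0 := Nat.cast_ne_zero.mpr (by omega)
  have hL1 : ((ℓ : ℂ) - 1) ≠ 0 := by
    have := cast_sub_ne ℓ 1 (by omega); simpa using this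
  obtain ⟨n, rfl⟩ : ∃ n, k = n + 2 := ⟨k - 2, by omega⟩
  simp only [show n + 2 - 1 = n + 1 from by omega]
  -- pointwise expression for e (n + 1 - t)
  have hpt : ∀ t, t < n + 2 → e (n + 1 - t)
      = -((((n : ℂ) + 2) - (t : ℂ)) * uu ℓ A β (n + 2 - t))
        - ∑ s ∈ Finset.range (n + 1 - t), e s * uu ℓ A β (n + 1 - t - s) := by
    intro t ht
    have hj := hstar (n + 1 - t) (by omega)
    rw [Finset.sum_range_succ, Nat.sub_self, uu_zero, mul_one,
      show n + 1 - t + 1 = n + 2 - t from by omega] at hj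
    have hc : ((n + 1 - t : ℕ) : ℂ) + 1 = ((n : ℂ) + 2) - (t : ℂ) := by
      rw [Nat.cast_sub (by omega : t ≤ n + 1)]
      push_cast; ring
    rw [hc] at hj
    linear_combination hj
  have step2 : ∑ t ∈ Finset.range (n + 2), e t * e (n + 1 - t)
      = -∑ t ∈ Finset.range (n + 2), (((n : ℂ) + 2) - (t : ℂ)) * (e t * uu ℓ A β (n + 2 - t))
        - ∑ t ∈ Finset.range (n + 2), ∑ s ∈ Finset.range (n + 1 - t),
            e t * (e s * uu ℓ A β (n + 1 - t - s)) := by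
    rw [← Finset.sum_neg_distrib, ← Finset.sum_sub_distrib]
    refine Finset.sum_congr rfl fun t ht => ?_
    rw [Finset.mem_range] at ht
    rw [hpt t ht, mul_sub, Finset.mul_sum]
    ring
  have step3 : ∑ t ∈ Finset.range (n + 2), ∑ s ∈ Finset.range (n + 1 - t),
        e t * (e s * uu ℓ A β (n + 1 - t - s))
      = ∑ r ∈ Finset.range (n + 1),
          (∑ t ∈ Finset.range (r + 1), e t * e (r - t)) * uu ℓ A β (n + 1 - r) := by
    have e1 : ∑ t ∈ Finset.range (n + 2), ∑ s ∈ Finset.range (n + 1 - t),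
          e t * (e s * uu ℓ A β (n + 1 - t - s))
        = ∑ t ∈ Finset.range (n + 1), ∑ s ∈ Finset.range ((n + 1) - t),
            e t * (e s * uu ℓ A β (n + 1 - t - s)) := by
      rw [Finset.sum_range_succ]
      simp [show (n + 1) - (n + 1) = 0 from by omega]
    rw [e1, tri (fun t s => e t * (e s * uu ℓ A β (n + 1 - t - s))) (n + 1)]
    refine Finset.sum_congr rfl fun r hr => ?_
    rw [Finset.mem_range] at hr
    rw [Finset.sum_mul]
    refine Finset.sum_congr rfl fun t ht => ?_
    rw [Finset.mem_range] at ht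
    rw [show n + 1 - t - (r - t) = n + 1 - r from by omega]
    ring
  have hS0 : e 0 * e 0 = B - ((ℓ : ℂ) - 1) * e 1 := by
    rw [h0, h1]
    field_simp
    ring
  have hSr : ∀ r, r < n →
      (∑ t ∈ Finset.range (r + 1 + 1), e t * e (r + 1 - t)) * uu ℓ A β (n - r)
        = -(((ℓ : ℂ) - ((r : ℂ) + 2)) * e (r + 2) * uu ℓ A β (n - r)) := by
    intro r hr
    have h := hrec (r + 1) (by omega) (by omega)
    have hD : ((ℓ : ℂ) - ((((r + 1) : ℕ) : ℂ) + 1)) ≠ 0 := by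
      convert cast_sub_ne ℓ (r + 2) (by omega) using 2
      push_cast; ring
    push_cast at h hD
    have h3 : e (r + 1 + 1) * ((ℓ : ℂ) - ((r : ℂ) + 1 + 1))
        = -∑ t ∈ Finset.range (r + 1 + 1), e t * e (r + 1 - t) := by
      rw [h]; field_simp
    have h2 : ∑ t ∈ Finset.range (r + 1 + 1), e t * e (r + 1 - t)
        = -((ℓ : ℂ) - ((r : ℂ) + 2)) * e (r + 2) := by
      linear_combination h3
    rw [h2]
    ring
  have step5 : ∑ r ∈ Finset.range (n + 1),
        (∑ t ∈ Finset.range (r + 1), e t * e (r - t)) * uu ℓ A β (n + 1 - r)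
      = B * uu ℓ A β (n + 1)
        - ∑ t ∈ Finset.range (n + 2), ((ℓ : ℂ) - (t : ℂ)) * (e t * uu ℓ A β (n + 2 - t))
        + (ℓ : ℂ) * e 0 * uu ℓ A β (n + 2) := by
    rw [Finset.sum_range_succ']
    simp only [Finset.sum_range_one, Nat.sub_zero]
    have congr1 : ∀ r ∈ Finset.range n,
        (∑ t ∈ Finset.range (r + 1 + 1), e t * e (r + 1 - t)) * uu ℓ A β (n + 1 - (r + 1))
          = -(((ℓ : ℂ) - ((r : ℂ) + 2)) * e (r + 2) * uu ℓ A β (n - r)) := by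
      intro r hr
      rw [Finset.mem_range] at hr
      rw [show n + 1 - (r + 1) = n - r from by omega]
      exact hSr r hr
    rw [Finset.sum_congr rfl congr1]
    simp only [zero_add, Finset.sum_range_one, Nat.sub_zero]
    have hG : ∑ t ∈ Finset.range (n + 2), ((ℓ : ℂ) - (t : ℂ)) * (e t * uu ℓ A β (n + 2 - t))
        = (ℓ : ℂ) * e 0 * uu ℓ A β (n + 2)
          + (((ℓ : ℂ) - 1) * e 1 * uu ℓ A β (n + 1)
            + ∑ r ∈ Finset.range n,
                ((ℓ : ℂ) - ((r : ℂ) + 2)) * e (r + 2) * uu ℓ A β (n - r)) := by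
      rw [Finset.sum_range_succ']
      rw [Finset.sum_range_succ' (f := fun t =>
        ((ℓ : ℂ) - ((t + 1 : ℕ) : ℂ)) * (e (t + 1) * uu ℓ A β (n + 2 - (t + 1))))]
      have congr2 : ∀ r ∈ Finset.range n,
          ((ℓ : ℂ) - ((r + 1 + 1 : ℕ) : ℂ)) * (e (r + 1 + 1) * uu ℓ A β (n + 2 - (r + 1 + 1)))
            = ((ℓ : ℂ) - ((r : ℂ) + 2)) * e (r + 2) * uu ℓ A β (n - r) := by
        intro r hr
        rw [show n + 2 - (r + 1 + 1) = n - r from by omega,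
          show r + 1 + 1 = r + 2 from rfl]
        push_cast
        ring
      rw [Finset.sum_congr rfl congr2]
      norm_num
      ring
    rw [hG, hS0, Finset.sum_neg_distrib]
    ring
  rw [step2, step3, step5]
  push_cast
  ring



lemma star (hℓ : 2 ≤ ℓ) (hβ : β ^ 2 = B)
    (h0 : e 0 = A / (ℓ : ℂ))
    (h1 : e 1 = -(A ^ 2 / (ℓ : ℂ) ^ 2 - B) / ((ℓ : ℂ) - 1))
    (hrec : ∀ k : ℕ, 1 ≤ k → k ≤ ℓ - 2 →
      e (k + 1) = -(1 / ((ℓ : ℂ) - ((k : ℂ) + 1)))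
        * ∑ t ∈ Finset.range (k + 1), e t * e (k - t)) :
    ∀ k, k + 1 ≤ ℓ → ∑ t ∈ Finset.range (k + 1), e t * uu ℓ A β (k - t)
      = -((k : ℂ) + 1) * uu ℓ A β (k + 1) := by
  have hL0 : ((ℓ : ℂ)) ≠ 0 := Nat.cast_ne_zero.mpr (by omega)
  have hL1 : ((ℓ : ℂ) - 1) ≠ 0 := by
    have := cast_sub_ne ℓ 1 (by omega); simpa using this
  intro k
  induction k using Nat.strong_induction_on with
  | _ k ih =>
    intro hk
    match k, hk, ih with
    | 0, hk, ih =>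
      rw [Finset.sum_range_one, Nat.sub_zero, uu_zero, uu_one ℓ (by omega) A β, h0]
      push_cast
      ring
    | 1, hk, ih =>
      have hu2 := uu_rec ℓ A β 1 le_rfl (by omega)
      rw [uu_one ℓ (by omega) A β] at hu2
      norm_num at hu2 ⊢
      -- hu2 : (1+1) * (1 - ℓ) * uu 2 = A * (-A/ℓ) + β^2 * uu 0
      rw [uu_zero] at hu2
      rw [Finset.sum_range_succ, Finset.sum_range_one, uu_one ℓ (by omega) A β, uu_zero,
        h0, h1]
      have h1m : ((1 : ℂ) - (ℓ : ℂ)) ≠ 0 := by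
        have h' := cast_sub_ne ℓ 1 (by omega)
        intro hh; apply h'; linear_combination -hh
      have huu2 : uu ℓ A β 2 = (A * (-A / (ℓ : ℂ)) + β ^ 2)
          / (((1 : ℂ) + 1) * ((1 : ℂ) - (ℓ : ℂ))) := by
        rw [eq_div_iff (mul_ne_zero (by norm_num) h1m)]
        linear_combination hu2
      rw [huu2, hβ]
      field_simp
      ring
    | (n + 2), hk, ih =>
      have hD : ((ℓ : ℂ) - ((n : ℂ) + 2)) ≠ 0 := by
        convert cast_sub_ne ℓ (n + 2) (by omega) using 2
        push_cast; ring
      have hS := Sform hℓ hβ h0 h1 hrec (n + 2) (by omega) (by omega)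
        (fun j hj => ih j hj (by omega))
      simp only [show n + 2 - 1 = n + 1 from rfl] at hS
      push_cast at hS
      have he := hrec (n + 1) (by omega) (by omega)
      have hDn : ((ℓ : ℂ) - (((n + 1 : ℕ) : ℂ) + 1)) ≠ 0 := by
        convert cast_sub_ne ℓ (n + 2) (by omega) using 2
        push_cast; ring
      push_cast at he hDn
      have heD : e (n + 2) * ((ℓ : ℂ) - ((n : ℂ) + 1 + 1))
          = -∑ t ∈ Finset.range (n + 1 + 1), e t * e (n + 1 - t) := by
        rw [show n + 2 = n + 1 + 1 from rfl, he]; field_simp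
      rw [show (n + 1 + 1 : ℕ) = n + 2 from rfl] at heD
      have hu := uu_rec ℓ A β (n + 2) (by omega) (by omega)
      simp only [show n + 2 - 1 = n + 1 from rfl] at hu
      push_cast at hu
      have hsum : ∑ t ∈ Finset.range (n + 2), ((ℓ : ℂ) - (t : ℂ)) * (e t * uu ℓ A β (n + 2 - t))
          = ((ℓ : ℂ) - ((n : ℂ) + 2)) * ∑ t ∈ Finset.range (n + 2), e t * uu ℓ A β (n + 2 - t)
            + ∑ t ∈ Finset.range (n + 2), ((n : ℂ) + 2 - (t : ℂ)) * (e t * uu ℓ A β (n + 2 - t)) := by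
        rw [Finset.mul_sum, ← Finset.sum_add_distrib]
        exact Finset.sum_congr rfl fun t _ => by ring
      have hA : (ℓ : ℂ) * e 0 = A := by rw [h0]; field_simp
      have key : ((ℓ : ℂ) - ((n : ℂ) + 2)) * ∑ t ∈ Finset.range (n + 2 + 1), e t * uu ℓ A β (n + 2 - t)
          = ((ℓ : ℂ) - ((n : ℂ) + 2)) * (-(((n + 2 : ℕ) : ℂ) + 1) * uu ℓ A β (n + 2 + 1)) := by
        rw [Finset.sum_range_succ, Nat.sub_self, uu_zero, mul_one]
        push_cast
        linear_combination heD - hS - hsum - hu - uu ℓ A β (n + 1) * hβ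
          + uu ℓ A β (n + 2) * hA
      exact mul_left_cancel₀ hD key

noncomputable def FF (ℓ : ℕ) (A β : ℂ) (m : ℕ) : ℂ :=
  (-1) ^ m * β ^ (ℓ - m) * PP ℓ A β (m + 1) / ((m.factorial : ℂ) * (ℓ.factorial : ℂ))

noncomputable def MM (ℓ : ℕ) (A β : ℂ) (m : ℕ) : ℂ :=
  (-1) ^ m * (m : ℂ) * β ^ (ℓ - m) * β * PP ℓ A β m / ((m.factorial : ℂ) * (ℓ.factorial : ℂ))

lemma key_c (hℓ : 1 ≤ ℓ) :
    A * uu ℓ A β ℓ + β ^ 2 * uu ℓ A β (ℓ - 1)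
      = (-1) ^ ℓ * PP ℓ A β (ℓ + 1) / ((ℓ.factorial : ℂ) * (ℓ.factorial : ℂ)) := by
  have claimA : ∀ m, m < ℓ →
      A * (cc ℓ β ℓ m * PP ℓ A β m) + β ^ 2 * (cc ℓ β (ℓ - 1) m * PP ℓ A β m)
        = FF ℓ A β m + MM ℓ A β m := by
    intro m hm
    obtain ⟨j, rfl⟩ : ∃ j, ℓ = m + 1 + j := ⟨ℓ - m - 1, by omega⟩
    simp only [cc, FF, MM,
      show m + 1 + j - m = j + 1 from by omega,
      show m + 1 + j - 1 = m + j from by omega,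
      show m + j - m = j from by omega]
    rw [PP_succ]
    have f1 := fact_ne m
    have f2 := fact_ne j
    have f3 := fact_ne (j + 1)
    have f4 := fact_ne (m + 1 + j)
    field_simp
    rw [fact1 j]
    push_cast
    ring
  have claimB : A * (cc ℓ β ℓ ℓ * PP ℓ A β ℓ) = FF ℓ A β ℓ + MM ℓ A β ℓ := by
    simp only [cc, FF, MM, Nat.sub_self, Nat.factorial_zero, pow_zero]
    rw [PP_succ]
    have f1 := fact_ne ℓ
    field_simp
    ring
  have h1 : A * uu ℓ A β ℓ + β ^ 2 * uu ℓ A β (ℓ - 1)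
      = ∑ m ∈ Finset.range (ℓ + 1), (FF ℓ A β m + MM ℓ A β m) := by
    rw [uu, uu, show ℓ - 1 + 1 = ℓ from by omega, Finset.mul_sum, Finset.mul_sum,
      Finset.sum_range_succ, Finset.sum_range_succ
        (f := fun m => FF ℓ A β m + MM ℓ A β m)]
    rw [add_right_comm, ← Finset.sum_add_distrib]
    rw [Finset.sum_congr rfl fun m hm => claimA m (Finset.mem_range.mp hm), claimB]
  have h2 : ∑ m ∈ Finset.range (ℓ + 1), MM ℓ A β m = -∑ m ∈ Finset.range ℓ, FF ℓ A β m := by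
    rw [Finset.sum_range_succ' (f := fun m => MM ℓ A β m), ← Finset.sum_neg_distrib]
    have hM0 : MM ℓ A β 0 = 0 := by simp [MM]
    rw [hM0, add_zero]
    refine Finset.sum_congr rfl fun m hm => ?_
    rw [Finset.mem_range] at hm
    -- MM (m+1) = - FF m
    obtain ⟨j, rfl⟩ : ∃ j, ℓ = m + 1 + j := ⟨ℓ - m - 1, by omega⟩
    simp only [MM, FF, show m + 1 + j - (m + 1) = j from by omega,
      show m + 1 + j - m = j + 1 from by omega]
    have f1 := fact_ne m
    have f2 := fact_ne (m + 1)
    have f3 := fact_ne (m + 1 + j)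
    field_simp
    rw [fact1 m, pow_succ]
    push_cast
    ring
  rw [h1, Finset.sum_add_distrib, h2, Finset.sum_range_succ, FF, Nat.sub_self, pow_zero]
  ring

end main

end Stmt2Aux

/-- the top-degree term of the log-free recursion.  With
`ẽ₀ = A/ℓ`, `ẽ₁ = −(A²/ℓ² − B)/(ℓ−1)` and
`ẽ_{k+1} = −(1/(ℓ−(k+1))) Σ_{t=0}^k ẽ_t ẽ_{k−t}` for `1 ≤ k ≤ ℓ−2`, one has
`−Σ_{t=0}^{ℓ−1} ẽ_t ẽ_{ℓ−1−t} = ((−1)^ℓ/(ℓ!)²) ∏_{j=0}^{ℓ} (A − (ℓ−2j)β)` where `β² = B`. -/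
theorem stmt2 (ℓ : ℕ) (hℓ : 2 ≤ ℓ) (A B β : ℂ) (hβ : β ^ 2 = B)
    (e : ℕ → ℂ)
    (h0 : e 0 = A / (ℓ : ℂ))
    (h1 : e 1 = -(A ^ 2 / (ℓ : ℂ) ^ 2 - B) / ((ℓ : ℂ) - 1))
    (hrec : ∀ k : ℕ, 1 ≤ k → k ≤ ℓ - 2 →
      e (k + 1) = -(1 / ((ℓ : ℂ) - ((k : ℂ) + 1)))
        * ∑ t ∈ Finset.range (k + 1), e t * e (k - t)) :
    -∑ t ∈ Finset.range ℓ, e t * e (ℓ - 1 - t)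
      = ((-1) ^ ℓ / ((Nat.factorial ℓ : ℂ)) ^ 2)
        * ∏ j ∈ Finset.range (ℓ + 1), (A - ((ℓ : ℂ) - 2 * (j : ℂ)) * β) := by
  have hL0 : ((ℓ : ℂ)) ≠ 0 := Nat.cast_ne_zero.mpr (by omega)
  have hA : (ℓ : ℂ) * e 0 = A := by
    rw [h0, mul_div_cancel₀ _ hL0]
  have hS := Stmt2Aux.Sform hℓ hβ h0 h1 hrec ℓ hℓ le_rfl
    (fun j hj => Stmt2Aux.star hℓ hβ h0 h1 hrec j (by omega))
  have hrev : ∏ j ∈ Finset.range (ℓ + 1), (A - ((ℓ : ℂ) - 2 * (j : ℂ)) * β)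
      = Stmt2Aux.PP ℓ A β (ℓ + 1) := by
    rw [Stmt2Aux.PP, ← Finset.prod_range_reflect (fun j => A - ((ℓ : ℂ) - 2 * (j : ℂ)) * β)]
    refine Finset.prod_congr rfl fun j hj => ?_
    rw [Finset.mem_range] at hj
    rw [show ℓ + 1 - 1 - j = ℓ - j from by omega, Nat.cast_sub (by omega : j ≤ ℓ)]
    ring
  have hkey := Stmt2Aux.key_c (ℓ := ℓ) (A := A) (β := β) (by omega)
  have hfne := Stmt2Aux.fact_ne ℓ
  calc -∑ t ∈ Finset.range ℓ, e t * e (ℓ - 1 - t)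
      = A * Stmt2Aux.uu ℓ A β ℓ + β ^ 2 * Stmt2Aux.uu ℓ A β (ℓ - 1) := by
        rw [hS, ← hA, ← hβ]; ring
    _ = (-1) ^ ℓ * Stmt2Aux.PP ℓ A β (ℓ + 1) / ((ℓ.factorial : ℂ) * (ℓ.factorial : ℂ)) := hkey
    _ = ((-1) ^ ℓ / ((Nat.factorial ℓ : ℂ)) ^ 2)
        * ∏ j ∈ Finset.range (ℓ + 1), (A - ((ℓ : ℂ) - 2 * (j : ℂ)) * β) := by
        rw [hrev]
        ring
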